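/- Let X be an integrable random vector in ℝ^p on a probability space (Ω, F, P), let Y be a real random variable, let B₁ be a real p×q₁ matrix, and let t ∈ ℝ. Assume: (a) E[X − E[X] | σ(B₁ᵀX)] = P_{B₁}(X − E[X]) almost surely, where P_{B₁} is the orthogonal projection of ℝ^p onto the column space of B₁; and (b) E[1_{{Y ≤ t}} | σ(X)] = E[1_{{Y ≤ t}} | σ(B₁ᵀX)] almost surely. Then the vector m(t) := E[(X − E[X])·1_{{Y ≤ t}}] belongs to the column space of B₁. -/

import Mathlib

open MeasureTheory
open scoped RealInnerProductSpace

/-- Under the linearity condition of sliced inverse regression and the condition that the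
conditional distribution function of `Y` given `X` at `t` depends on `X` only through
`B₁ᵀX`, the vector `m(t) = E[(X − E[X])·1_{Y ≤ t}]` belongs to the column space of `B₁`.

Hypothesis `ha` is the linearity condition: the conditional expectation of `X − E[X]`
given `σ(B₁ᵀX)` equals the orthogonal projection of `X − E[X]` onto the column space
`K` of `B₁`, almost surely.  Hypothesis `hb` says `E[1_{Y ≤ t} | σ(X)] = E[1_{Y ≤ t} |
σ(B₁ᵀX)]` almost surely. -/
theorem mean_slice_mem_colSpace (Ω : Type*) [MeasurableSpace Ω]
    (P : Measure Ω) [IsProbabilityMeasure P]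
    (p q₁ : ℕ)
    (X : Ω → EuclideanSpace ℝ (Fin p)) (hXmeas : Measurable X) (hXint : Integrable X P)
    (Y : Ω → ℝ) (hYmeas : Measurable Y)
    (B₁ : Matrix (Fin p) (Fin q₁) ℝ) (t : ℝ)
    (K : Submodule ℝ (EuclideanSpace ℝ (Fin p)))
    (hK : K = LinearMap.range (Matrix.toEuclideanLin B₁))
    (mB : MeasurableSpace Ω)
    (hmB : mB = MeasurableSpace.comap
      (fun ω => Matrix.toEuclideanLin B₁.transpose (X ω)) inferInstance)
    (ha : P[(fun ω => X ω - ∫ ω', X ω' ∂P) | mB] =ᵐ[P]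
      fun ω => (Submodule.orthogonalProjectionOnto K (X ω - ∫ ω', X ω' ∂P) : EuclideanSpace ℝ (Fin p)))
    (hb : P[(fun ω => if Y ω ≤ t then (1 : ℝ) else 0) | MeasurableSpace.comap X inferInstance]
      =ᵐ[P] P[(fun ω => if Y ω ≤ t then (1 : ℝ) else 0) | mB]) :
    (∫ ω, (if Y ω ≤ t then (1 : ℝ) else 0) • (X ω - ∫ ω', X ω' ∂P) ∂P) ∈ K := by
  classical
  rename_i m0inst pminst
  letI : MeasurableSpace Ω := m0inst
  set μ : EuclideanSpace ℝ (Fin p) := ∫ ω', X ω' ∂P with hμdef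
  set Z : Ω → ℝ := fun ω => if Y ω ≤ t then (1 : ℝ) else 0 with hZdef
  set G : Ω → EuclideanSpace ℝ (Fin p) := fun ω => X ω - μ with hGdef
  -- measurable space inequalities
  have hσX_le : MeasurableSpace.comap X inferInstance ≤ _ := hXmeas.comap_le
  have hL : Measurable (Matrix.toEuclideanLin B₁.transpose :
      EuclideanSpace ℝ (Fin p) →ₗ[ℝ] EuclideanSpace ℝ (Fin q₁)) :=
    (LinearMap.continuous_of_finiteDimensional _).measurable
  have hmB_le_σX : mB ≤ MeasurableSpace.comap X inferInstance := by
    rw [hmB]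
    have h : (fun ω => Matrix.toEuclideanLin B₁.transpose (X ω))
        = (Matrix.toEuclideanLin B₁.transpose :
            EuclideanSpace ℝ (Fin p) →ₗ[ℝ] EuclideanSpace ℝ (Fin q₁)) ∘ X := rfl
    rw [h, ← MeasurableSpace.comap_comp]
    exact MeasurableSpace.comap_mono hL.comap_le
  have hmB_le : mB ≤ _ := hmB_le_σX.trans hσX_le
  -- basic integrability / measurability
  have hZaesm : AEStronglyMeasurable Z P := by
    refine Measurable.aestronglyMeasurable ?_
    exact Measurable.ite (measurableSet_le hYmeas measurable_const)
      measurable_const measurable_const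
  have hZbdd : ∀ ω, ‖Z ω‖ ≤ 1 := by
    intro ω; by_cases h : Y ω ≤ t <;> simp [hZdef, h]
  have hZint : Integrable Z P :=
    Integrable.mono' (integrable_const (1 : ℝ)) hZaesm
      (Filter.Eventually.of_forall hZbdd)
  have hGint : Integrable G P := hXint.sub (integrable_const μ)
  have hcint : Integrable (fun ω => Z ω • G ω) P := by
    have h : Integrable (Z • G) P := hGint.smul_of_top_right
      (memLp_top_of_bound hZaesm 1 (Filter.Eventually.of_forall hZbdd))
    exact h
  rw [← K.orthogonal_orthogonal, Submodule.mem_orthogonal]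
  intro v hv
  set f : Ω → ℝ := fun ω => (innerSL ℝ v) (G ω) with hfdef
  have hfint : Integrable f P := (innerSL ℝ v).integrable_comp hGint
  have hXσX : Measurable[MeasurableSpace.comap X inferInstance] X :=
    Measurable.of_comap_le le_rfl
  have hfsm : StronglyMeasurable[MeasurableSpace.comap X inferInstance] f :=
    ((innerSL ℝ v).measurable.comp (hXσX.sub measurable_const)).stronglyMeasurable
  have hPint : Integrable (fun ω => Submodule.orthogonalProjectionOnto K (G ω)) P :=
    (Submodule.orthogonalProjectionOnto K).integrable_comp hGint
  have hcond0 : P[f|mB] =ᵐ[P] (fun _ => (0 : ℝ)) := by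
    refine (ae_eq_condExp_of_forall_setIntegral_eq hmB_le hfint
      (fun s _ _ => (integrable_zero _ _ _).integrableOn)
      (fun s hs _ => ?_)
      ((stronglyMeasurable_zero : StronglyMeasurable[mB] (fun _ => (0:ℝ))).aestronglyMeasurable)).symm
    have h1 : ∫ ω in s, f ω ∂P = (innerSL ℝ v) (∫ ω in s, G ω ∂P) :=
      (innerSL ℝ v).integral_comp_comm hGint.integrableOn
    have h2 : ∫ ω in s, G ω ∂P = ∫ ω in s, (P[G|mB]) ω ∂P :=
      (setIntegral_condExp hmB_le hGint hs).symm
    have h3 : ∫ ω in s, (P[G|mB]) ω ∂P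
        = ∫ ω in s, ((Submodule.orthogonalProjectionOnto K (X ω - μ) : EuclideanSpace ℝ (Fin p))) ∂P :=
      setIntegral_congr_ae (hmB_le s hs) (ha.mono fun ω hω _ => hω)
    have h4 : (∫ ω in s, ((Submodule.orthogonalProjectionOnto K (X ω - μ) : EuclideanSpace ℝ (Fin p))) ∂P)
        ∈ K := by
      have h : ∫ ω in s, ((Submodule.orthogonalProjectionOnto K (X ω - μ) : EuclideanSpace ℝ (Fin p))) ∂P
          = K.subtypeL (∫ ω in s, Submodule.orthogonalProjectionOnto K (G ω) ∂P) :=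
        K.subtypeL.integral_comp_comm hPint.integrableOn
      rw [h]
      exact SetLike.coe_mem _
    rw [h1, h2, h3]
    have h5 := (Submodule.mem_orthogonal' K v).mp hv _ h4
    simpa using h5.symm
  set W : Ω → ℝ := P[Z|mB] with hWdef
  have hWsm : StronglyMeasurable[mB] W := stronglyMeasurable_condExp
  have hWbdd : ∀ᵐ ω ∂P, ‖W ω‖ ≤ 1 := by
    have h0 : (0 : Ω → ℝ) ≤ᵐ[P] W := condExp_nonneg (Filter.Eventually.of_forall fun ω => by
      by_cases h : Y ω ≤ t <;> simp [hZdef, h])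
    have h1 : W ≤ᵐ[P] P[(fun _ => (1 : ℝ))|mB] :=
      condExp_mono hZint (integrable_const 1) (Filter.Eventually.of_forall fun ω => by
        by_cases h : Y ω ≤ t <;> simp [hZdef, h])
    rw [condExp_const hmB_le] at h1
    filter_upwards [h0, h1] with ω h0ω h1ω
    rw [Real.norm_eq_abs, abs_le]
    exact ⟨le_trans (by norm_num) h0ω, h1ω⟩
  have hWf_int : Integrable (fun ω => W ω * f ω) P :=
    hfint.bdd_mul (hWsm.mono hmB_le).aestronglyMeasurable hWbdd
  have hZf_int : Integrable (fun ω => Z ω * f ω) P :=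
    hfint.bdd_mul hZaesm (Filter.Eventually.of_forall hZbdd)
  have hfZ_int : Integrable (f * Z) P := by
    have h : (f * Z) = fun ω => Z ω * f ω := by funext ω; exact mul_comm _ _
    rw [h]; exact hZf_int
  have key : (inner ℝ v (∫ ω, Z ω • G ω ∂P) : ℝ) = 0 := by
    have e1 : (inner ℝ v (∫ ω, Z ω • G ω ∂P) : ℝ) = ∫ ω, (f * Z) ω ∂P := by
      have h0 : (inner ℝ v (∫ ω, Z ω • G ω ∂P) : ℝ) = (innerSL ℝ v) (∫ ω, Z ω • G ω ∂P) := rfl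
      rw [h0, ← (innerSL ℝ v).integral_comp_comm hcint]
      refine integral_congr_ae (Filter.Eventually.of_forall fun ω => ?_)
      simp [hfdef, inner_smul_right, mul_comm]
    have e3 : P[f * Z|MeasurableSpace.comap X inferInstance] =ᵐ[P]
        f * P[Z|MeasurableSpace.comap X inferInstance] :=
      condExp_mul_of_stronglyMeasurable_left hfsm hfZ_int hZint
    have e4 : f * P[Z|MeasurableSpace.comap X inferInstance] =ᵐ[P] fun ω => W ω * f ω := by
      filter_upwards [hb] with ω hω
      simp only [Pi.mul_apply]
      rw [hω]; exact mul_comm _ _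
    have e5 : P[(fun ω => W ω * f ω)|mB] =ᵐ[P] W * P[f|mB] := by
      have h : (fun ω => W ω * f ω) = W * f := rfl
      rw [h]
      exact condExp_mul_of_stronglyMeasurable_left hWsm (by rw [h] at hWf_int; exact hWf_int) hfint
    calc (inner ℝ v (∫ ω, Z ω • G ω ∂P) : ℝ)
        = ∫ ω, (f * Z) ω ∂P := e1
      _ = ∫ ω, (P[f * Z|MeasurableSpace.comap X inferInstance]) ω ∂P :=
          (integral_condExp hσX_le).symm
      _ = ∫ ω, W ω * f ω ∂P := integral_congr_ae (e3.trans e4)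
      _ = ∫ ω, (P[(fun ω => W ω * f ω)|mB]) ω ∂P := (integral_condExp hmB_le).symm
      _ = ∫ ω, (0 : ℝ) ∂P := integral_congr_ae (e5.trans (by
            filter_upwards [hcond0] with ω hω
            simp [Pi.mul_apply, hω]))
      _ = 0 := integral_zero _ _
  exact key
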